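/- Let X ∈ ℝ^{n×n} be skew-symmetric, set ρ := ‖X‖₂, and define Cay(X) := (I − X)⁻¹(I + X) (well-defined since I − X is invertible for skew-symmetric X), S_K(X) := Σ_{j=0}^{K} X^j, and the Neumann-truncated map Cay^{(K)}(X) := S_K(X)·(I + X). Then: (i) Cay(X) − Cay^{(K)}(X) = X^{K+1}·Cay(X), equivalently Cay^{(K)}(X) = (I − X^{K+1})·Cay(X); (ii) since Cay(X) is orthogonal, ‖Cay(X) − Cay^{(K)}(X)‖_F = ‖X^{K+1}‖_F ≤ √n·ρ^{K+1}; and (iii) if K is even (so X^{K+1} is skew-symmetric), the orthogonality defect satisfies ‖Cay^{(K)}(X)ᵀ·Cay^{(K)}(X) − I‖_F ≤ ‖X^{K+1}‖_F². -/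
import Mathlib

open Matrix

/-- Frobenius norm of a real square matrix. -/
noncomputable def frobNorm {n : ℕ} (X : Matrix (Fin n) (Fin n) ℝ) : ℝ :=
  Real.sqrt (∑ i, ∑ j, (X i j) ^ 2)

/-- Spectral (ℓ²-operator) norm of a real square matrix. -/
noncomputable def specNorm {n : ℕ} (X : Matrix (Fin n) (Fin n) ℝ) : ℝ :=
  ‖LinearMap.toContinuousLinearMap (Matrix.toEuclideanLin X)‖

/-- The Cayley map `Cay(X) = (I − X)⁻¹ (I + X)`. -/
noncomputable def cayleyFull {n : ℕ} (X : Matrix (Fin n) (Fin n) ℝ) :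
    Matrix (Fin n) (Fin n) ℝ :=
  (1 - X)⁻¹ * (1 + X)

/-- The partial Neumann sum `S_K(X) = Σ_{j=0}^{K} X^j`. -/
noncomputable def neumannSum {n : ℕ} (K : ℕ) (X : Matrix (Fin n) (Fin n) ℝ) :
    Matrix (Fin n) (Fin n) ℝ :=
  ∑ j ∈ Finset.range (K + 1), X ^ j

/-- The Neumann-truncated Cayley map `Cay^{(K)}(X) = S_K(X)(I + X)`. -/
noncomputable def cayleyTrunc {n : ℕ} (K : ℕ) (X : Matrix (Fin n) (Fin n) ℝ) :
    Matrix (Fin n) (Fin n) ℝ :=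
  neumannSum K X * (1 + X)

/- ### Auxiliary lemmas -/

lemma aux_isUnit_one_sub {n : ℕ} (X : Matrix (Fin n) (Fin n) ℝ) (hX : Xᵀ = -X) :
    IsUnit (1 - X) := by
  rw [Matrix.isUnit_iff_isUnit_det, isUnit_iff_ne_zero]
  intro hdet
  obtain ⟨v, hv, h0⟩ := (Matrix.exists_mulVec_eq_zero_iff).2 hdet
  have hvX : X *ᵥ v = v := by
    rw [Matrix.sub_mulVec, Matrix.one_mulVec, sub_eq_zero] at h0
    exact h0.symm
  have h2 : v ⬝ᵥ (X *ᵥ v) = -(v ⬝ᵥ (X *ᵥ v)) := by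
    calc v ⬝ᵥ (X *ᵥ v) = (v ᵥ* X) ⬝ᵥ v := Matrix.dotProduct_mulVec v X v
    _ = (Xᵀ *ᵥ v) ⬝ᵥ v := by rw [Matrix.mulVec_transpose]
    _ = -((X *ᵥ v) ⬝ᵥ v) := by rw [hX, Matrix.neg_mulVec, neg_dotProduct]
    _ = -(v ⬝ᵥ (X *ᵥ v)) := by rw [dotProduct_comm]
  have h3 : v ⬝ᵥ v = 0 := by
    have := h2
    rw [hvX] at this
    linarith [this]
  exact hv ((dotProduct_self_eq_zero).1 h3)

lemma aux_sum_sq_eq_trace {n : ℕ} (M : Matrix (Fin n) (Fin n) ℝ) :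
    ∑ i, ∑ j, (M i j) ^ 2 = Matrix.trace (M * Mᵀ) := by
  simp [Matrix.trace, Matrix.mul_apply, Matrix.diag, sq]

lemma aux_frob_transpose {n : ℕ} (M : Matrix (Fin n) (Fin n) ℝ) :
    frobNorm Mᵀ = frobNorm M := by
  unfold frobNorm
  rw [Finset.sum_comm]
  simp [Matrix.transpose_apply]

lemma aux_frob_neg {n : ℕ} (M : Matrix (Fin n) (Fin n) ℝ) :
    frobNorm (-M) = frobNorm M := by
  unfold frobNorm; simp

lemma aux_frob_right_orth {n : ℕ} (A Q : Matrix (Fin n) (Fin n) ℝ)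
    (hQ : Q * Qᵀ = 1) : frobNorm (A * Q) = frobNorm A := by
  unfold frobNorm
  congr 1
  rw [aux_sum_sq_eq_trace, aux_sum_sq_eq_trace]
  rw [Matrix.transpose_mul, show A * Q * (Qᵀ * Aᵀ) = A * (Q * Qᵀ) * Aᵀ by
    noncomm_ring, hQ, mul_one]

lemma aux_frob_left_orth {n : ℕ} (Q A : Matrix (Fin n) (Fin n) ℝ)
    (hQ : Q * Qᵀ = 1) : frobNorm (Q * A) = frobNorm A := by
  rw [← aux_frob_transpose (Q * A), Matrix.transpose_mul,
    aux_frob_right_orth _ _ (by rw [Matrix.transpose_transpose]; exact mul_eq_one_comm.1 hQ),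
    aux_frob_transpose]

section FrobInstances

attribute [local instance] Matrix.frobeniusSeminormedAddCommGroup

lemma aux_frobNorm_eq_norm {n : ℕ} (M : Matrix (Fin n) (Fin n) ℝ) :
    frobNorm M = ‖M‖ := by
  rw [Matrix.frobenius_norm_def, frobNorm, Real.sqrt_eq_rpow]
  congr 1
  refine Finset.sum_congr rfl fun i _ => Finset.sum_congr rfl fun j _ => ?_
  rw [Real.rpow_two, Real.norm_eq_abs, sq_abs]

lemma aux_frob_mul_le {n : ℕ} (A B : Matrix (Fin n) (Fin n) ℝ) :
    frobNorm (A * B) ≤ frobNorm A * frobNorm B := by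
  simp_rw [aux_frobNorm_eq_norm]
  exact Matrix.frobenius_norm_mul A B

end FrobInstances

section SpecInstances

open scoped Matrix.Norms.L2Operator

lemma aux_specNorm_eq_norm {n : ℕ} (M : Matrix (Fin n) (Fin n) ℝ) :
    specNorm M = ‖M‖ := rfl

lemma aux_spec_mul_le {n : ℕ} (A B : Matrix (Fin n) (Fin n) ℝ) :
    specNorm (A * B) ≤ specNorm A * specNorm B := by
  simp_rw [aux_specNorm_eq_norm]
  exact Matrix.l2_opNorm_mul A B

lemma aux_spec_nonneg {n : ℕ} (A : Matrix (Fin n) (Fin n) ℝ) : 0 ≤ specNorm A :=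
  norm_nonneg _

lemma aux_spec_pow_le {n : ℕ} (A : Matrix (Fin n) (Fin n) ℝ) (k : ℕ) :
    specNorm (A ^ (k + 1)) ≤ specNorm A ^ (k + 1) := by
  induction k with
  | zero => simp
  | succ m ih =>
    calc specNorm (A ^ (m + 2)) = specNorm (A ^ (m + 1) * A) := by rw [pow_succ]
    _ ≤ specNorm (A ^ (m + 1)) * specNorm A := aux_spec_mul_le _ _
    _ ≤ specNorm A ^ (m + 1) * specNorm A := by
        exact mul_le_mul_of_nonneg_right ih (aux_spec_nonneg A)
    _ = specNorm A ^ (m + 2) := by ring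

lemma aux_col_sq_le {n : ℕ} (M : Matrix (Fin n) (Fin n) ℝ) (j : Fin n) :
    ∑ i, (M i j) ^ 2 ≤ specNorm M ^ 2 := by
  have h := Matrix.l2_opNorm_mulVec M ((EuclideanSpace.single j (1 : ℝ)))
  rw [EuclideanSpace.norm_single, norm_one, mul_one] at h
  have hv : (EuclideanSpace.equiv (Fin n) ℝ).symm (M *ᵥ (EuclideanSpace.single j (1 : ℝ)))
      = (EuclideanSpace.equiv (Fin n) ℝ).symm (Mᵀ j) := by
    congr 1
    show M *ᵥ Pi.single j 1 = Mᵀ j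
    exact Matrix.mulVec_single_one M j
  rw [hv] at h
  have hnorm : ‖(EuclideanSpace.equiv (Fin n) ℝ).symm (Mᵀ j)‖
      = Real.sqrt (∑ i, (M i j) ^ 2) := by
    rw [EuclideanSpace.norm_eq]
    congr 1
    refine Finset.sum_congr rfl fun i _ => ?_
    simp [sq_abs]
  rw [hnorm] at h
  calc ∑ i, (M i j) ^ 2 = Real.sqrt (∑ i, (M i j) ^ 2) ^ 2 := by
        rw [Real.sq_sqrt]
        positivity
  _ ≤ specNorm M ^ 2 := by
        apply pow_le_pow_left₀ (Real.sqrt_nonneg _) h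

lemma aux_frob_le_sqrt_spec {n : ℕ} (M : Matrix (Fin n) (Fin n) ℝ) :
    frobNorm M ≤ Real.sqrt n * specNorm M := by
  have h1 : ∑ i, ∑ j, (M i j) ^ 2 ≤ (n : ℝ) * specNorm M ^ 2 := by
    rw [Finset.sum_comm]
    calc ∑ j, ∑ i, (M i j) ^ 2 ≤ ∑ _j : Fin n, specNorm M ^ 2 :=
          Finset.sum_le_sum fun j _ => aux_col_sq_le M j
    _ = (n : ℝ) * specNorm M ^ 2 := by simp [mul_comm]
  calc frobNorm M ≤ Real.sqrt ((n : ℝ) * specNorm M ^ 2) := Real.sqrt_le_sqrt h1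
  _ = Real.sqrt n * specNorm M := by
      rw [Real.sqrt_mul (Nat.cast_nonneg n), Real.sqrt_sq (aux_spec_nonneg M)]

end SpecInstances

theorem neumann_truncation_error {n : ℕ} (K : ℕ)
    (X : Matrix (Fin n) (Fin n) ℝ) (hX : Xᵀ = -X) :
    cayleyFull X - cayleyTrunc K X = X ^ (K + 1) * cayleyFull X ∧
    cayleyTrunc K X = (1 - X ^ (K + 1)) * cayleyFull X ∧
    frobNorm (cayleyFull X - cayleyTrunc K X) = frobNorm (X ^ (K + 1)) ∧
    frobNorm (X ^ (K + 1)) ≤ Real.sqrt n * specNorm X ^ (K + 1) ∧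
    (Even K →
      frobNorm ((cayleyTrunc K X)ᵀ * cayleyTrunc K X - 1)
        ≤ frobNorm (X ^ (K + 1)) ^ 2) := by
  set C := cayleyFull X with hC
  set E := X ^ (K + 1) with hE
  -- invertibility
  have hU : IsUnit (1 - X) := aux_isUnit_one_sub X hX
  have hV : IsUnit (1 + X) := by
    have := aux_isUnit_one_sub (-X) (by rw [Matrix.transpose_neg, hX, neg_neg])
    rwa [sub_neg_eq_add] at this
  have hUdet : IsUnit (1 - X).det := (Matrix.isUnit_iff_isUnit_det _).1 hU
  have hVdet : IsUnit (1 + X).det := (Matrix.isUnit_iff_isUnit_det _).1 hV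
  -- (1 - X) * C = 1 + X
  have hUC : (1 - X) * C = 1 + X := by
    rw [hC, cayleyFull, ← mul_assoc, Matrix.mul_nonsing_inv _ hUdet, one_mul]
  -- geometric sum identity
  have hgeom : neumannSum K X * (1 - X) = 1 - E := by
    have h := geom_sum_mul X (K + 1)
    rw [neumannSum, (neg_sub X 1).symm,
      mul_neg, h, neg_sub, hE]
  -- (ii in statement order): trunc closed form
  have htrunc : cayleyTrunc K X = (1 - E) * C := by
    rw [cayleyTrunc, ← hUC, ← mul_assoc, hgeom]
  -- (i): difference
  have hdiff : C - cayleyTrunc K X = E * C := by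
    rw [htrunc, sub_mul, one_mul, sub_sub_cancel]
  -- orthogonality of C
  have hT : (1 - X)ᵀ = 1 + X := by
    rw [Matrix.transpose_sub, Matrix.transpose_one, hX, sub_neg_eq_add]
  have hCT : Cᵀ = (1 - X) * (1 + X)⁻¹ := by
    rw [hC, cayleyFull, Matrix.transpose_mul, Matrix.transpose_nonsing_inv, hT,
      show (1 + X : Matrix (Fin n) (Fin n) ℝ)ᵀ = 1 - X by
        rw [Matrix.transpose_add, Matrix.transpose_one, hX, ← sub_eq_add_neg]]
  have hcomm : (1 + X) * (1 - X) = (1 - X) * (1 + X) := by noncomm_ring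
  have hQ : C * Cᵀ = 1 := by
    rw [hCT, hC, cayleyFull]
    calc (1 - X)⁻¹ * (1 + X) * ((1 - X) * (1 + X)⁻¹)
        = (1 - X)⁻¹ * ((1 + X) * (1 - X)) * (1 + X)⁻¹ := by noncomm_ring
      _ = (1 - X)⁻¹ * ((1 - X) * (1 + X)) * (1 + X)⁻¹ := by rw [hcomm]
      _ = ((1 - X)⁻¹ * (1 - X)) * ((1 + X) * (1 + X)⁻¹) := by noncomm_ring
      _ = 1 := by rw [Matrix.nonsing_inv_mul _ hUdet, Matrix.mul_nonsing_inv _ hVdet, one_mul]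
  refine ⟨hdiff, htrunc, ?_, ?_, ?_⟩
  · rw [hdiff, aux_frob_right_orth _ _ hQ]
  · exact le_trans (aux_frob_le_sqrt_spec E)
      (mul_le_mul_of_nonneg_left (aux_spec_pow_le X K) (Real.sqrt_nonneg _))
  · intro hK
    have hEskew : Eᵀ = -E := by
      rw [hE, Matrix.transpose_pow, hX, Odd.neg_pow (Even.add_one hK)]
    have hTT : (cayleyTrunc K X)ᵀ * cayleyTrunc K X - 1 = -(Cᵀ * (E * E * C)) := by
      rw [htrunc, Matrix.transpose_mul, Matrix.transpose_sub, Matrix.transpose_one, hEskew,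
        sub_neg_eq_add]
      have hCC : Cᵀ * C = 1 := mul_eq_one_comm.1 hQ
      calc Cᵀ * (1 + E) * ((1 - E) * C) - 1
          = Cᵀ * C + Cᵀ * ((1 + E) * (1 - E) - 1) * C - 1 := by noncomm_ring
        _ = Cᵀ * ((1 + E) * (1 - E) - 1) * C := by rw [hCC]; abel
        _ = -(Cᵀ * (E * E * C)) := by
            rw [show ((1 + E) * (1 - E) - 1 : Matrix (Fin n) (Fin n) ℝ) = -(E * E) by
              noncomm_ring]
            noncomm_ring
    rw [hTT, aux_frob_neg]
    have hCC : Cᵀ * C = 1 := mul_eq_one_comm.1 hQ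
    have h1 : frobNorm (Cᵀ * (E * E * C)) = frobNorm (E * E * C) :=
      aux_frob_left_orth Cᵀ _ (by rw [Matrix.transpose_transpose]; exact hCC)
    have h2 : frobNorm (E * E * C) = frobNorm (E * E) := aux_frob_right_orth _ _ hQ
    rw [h1, h2, sq]
    exact aux_frob_mul_le E E
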